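/- Suppose f : ℝ → ℝ satisfies (f1)–(f5), let h = f⁻¹ and H(t) = ∫₀ᵗ h(s) ds. Then there exist constants c₂ > 0 and δ' > 0 such that H(t) ≥ c₂ t^{q/(q−1)} for all t ∈ [0, δ') and H(t) ≥ c₂ t^{p/(p−1)} for all t ≥ δ'. -/

import Mathlib

open Filter Set

private lemma aux_half_int {h : ℝ → ℝ} (hmono : Monotone h)
    (hnn : ∀ s : ℝ, 0 ≤ s → 0 ≤ h s) {t : ℝ} (ht : 0 < t) :
    t / 2 * h (t / 2) ≤ ∫ s in (0:ℝ)..t, h s := by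
  have hint : ∀ a b : ℝ, IntervalIntegrable h MeasureTheory.volume a b := fun a b =>
    (hmono.monotoneOn _).intervalIntegrable
  have hsplit := intervalIntegral.integral_add_adjacent_intervals (hint 0 (t/2)) (hint (t/2) t)
  have h2 : 0 ≤ ∫ s in (0:ℝ)..(t/2), h s :=
    intervalIntegral.integral_nonneg (by linarith) (fun u hu => hnn u hu.1)
  have h3 : ∫ _ in (t/2)..t, h (t/2) ≤ ∫ s in (t/2)..t, h s :=
    intervalIntegral.integral_mono_on (by linarith) intervalIntegrable_const (hint _ _)
      (fun u hu => hmono hu.1)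
  rw [intervalIntegral.integral_const, smul_eq_mul] at h3
  nlinarith [h3, hsplit]

private lemma aux_int_mono {h : ℝ → ℝ} (hmono : Monotone h)
    (hnn : ∀ s : ℝ, 0 ≤ s → 0 ≤ h s) {s t : ℝ} (hs : 0 ≤ s) (hst : s ≤ t) :
    (∫ x in (0:ℝ)..s, h x) ≤ ∫ x in (0:ℝ)..t, h x := by
  have hint : ∀ a b : ℝ, IntervalIntegrable h MeasureTheory.volume a b := fun a b =>
    (hmono.monotoneOn _).intervalIntegrable
  have hsplit := intervalIntegral.integral_add_adjacent_intervals (hint 0 s) (hint s t)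
  have h2 : 0 ≤ ∫ x in s..t, h x :=
    intervalIntegral.integral_nonneg hst (fun u hu => hnn u (le_trans hs hu.1))
  linarith

theorem stmt_5 (f h : ℝ → ℝ) (c₀ p b₀ q : ℝ)
    (hf1 : ContDiff ℝ 1 f) (hf01 : f 0 = 0) (hf02 : deriv f 0 = 0)
    (hf2 : ∀ t : ℝ, f (-t) = - f t)
    (hc₀ : 0 < c₀) (hp : 2 < p)
    (hf3 : Filter.Tendsto (fun t : ℝ => f t / t ^ (p - 1)) Filter.atTop (nhds c₀))
    (hb₀ : 0 < b₀) (hq2 : 2 < q) (hqp : q ≤ p)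
    (hf4 : Filter.Tendsto (fun t : ℝ => f t / t ^ (q - 1))
      (nhdsWithin 0 (Set.Ioi 0)) (nhds b₀))
    (hf5 : StrictMonoOn (fun t : ℝ => f t / t) (Set.Ioi 0))
    (hhf : Function.LeftInverse h f) (hfh : Function.RightInverse h f) :
    ∃ c₂ δ' : ℝ, 0 < c₂ ∧ 0 < δ' ∧
      (∀ t : ℝ, 0 ≤ t → t < δ' → c₂ * t ^ (q / (q - 1)) ≤ ∫ s in (0:ℝ)..t, h s) ∧
      (∀ t : ℝ, δ' ≤ t → c₂ * t ^ (p / (p - 1)) ≤ ∫ s in (0:ℝ)..t, h s) := by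
  have hqpos : (0:ℝ) < q - 1 := by linarith
  have hppos : (0:ℝ) < p - 1 := by linarith
  have hrq : q / (q - 1) = 1 + (q - 1)⁻¹ := by field_simp; ring
  have hrp : p / (p - 1) = 1 + (p - 1)⁻¹ := by field_simp; ring
  have hrq0 : 0 < q / (q - 1) := div_pos (by linarith) hqpos
  have hrp0 : 0 < p / (p - 1) := div_pos (by linarith) hppos
  -- f is positive on (0, ∞)
  have hfpos : ∀ t : ℝ, 0 < t → 0 < f t := by
    intro t ht
    have hev : ∀ᶠ s in nhdsWithin 0 (Set.Ioi 0), 0 < f s / s ^ (q - 1) :=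
      hf4.eventually_const_lt (by linarith)
    obtain ⟨u, hu, hsub⟩ := mem_nhdsGT_iff_exists_Ioo_subset.mp hev
    have hu0 : 0 < u := hu
    set s := min (u / 2) (t / 2) with hsdef
    have hs0 : 0 < s := lt_min (by linarith) (by linarith)
    have hsu : s < u := lt_of_le_of_lt (min_le_left _ _) (by linarith)
    have hst : s < t := lt_of_le_of_lt (min_le_right _ _) (by linarith)
    have h1 : 0 < f s / s ^ (q - 1) := hsub ⟨hs0, hsu⟩
    have h2 : 0 < f s := by
      have h2' := mul_pos h1 (Real.rpow_pos_of_pos hs0 (q - 1))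
      rwa [div_mul_cancel₀ _ (ne_of_gt (Real.rpow_pos_of_pos hs0 (q - 1)))] at h2'
    have h3 : f s / s < f t / t := hf5 (mem_Ioi.mpr hs0) (mem_Ioi.mpr ht) hst
    have h5 : 0 < f t / t := lt_trans (div_pos h2 hs0) h3
    have h6 := mul_pos h5 ht
    rwa [div_mul_cancel₀ _ (ne_of_gt ht)] at h6
  -- f is strictly monotone
  have hkey : ∀ x y : ℝ, 0 ≤ x → x < y → f x < f y := by
    intro x y hx hxy
    rcases eq_or_lt_of_le hx with rfl | hx'
    · rw [hf01]; exact hfpos y hxy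
    · have h1 : f x / x < f y / y := hf5 (mem_Ioi.mpr hx') (mem_Ioi.mpr (hx'.trans hxy)) hxy
      have h2 : 0 < f y / y := div_pos (hfpos y (hx'.trans hxy)) (hx'.trans hxy)
      have e1 : x * (f x / x) = f x := by
        rw [mul_comm]; exact div_mul_cancel₀ _ (ne_of_gt hx')
      have e2 : y * (f y / y) = f y := by
        rw [mul_comm]; exact div_mul_cancel₀ _ (ne_of_gt (hx'.trans hxy))
      calc f x = x * (f x / x) := e1.symm
        _ < x * (f y / y) := mul_lt_mul_of_pos_left h1 hx'
        _ ≤ y * (f y / y) := mul_le_mul_of_nonneg_right hxy.le h2.le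
        _ = f y := e2
  have hsm : StrictMono f := by
    intro x y hxy
    rcases le_or_gt 0 x with hx | hx
    · exact hkey x y hx hxy
    · rcases le_or_gt y 0 with hy | hy
      · have := hkey (-y) (-x) (by linarith) (by linarith)
        rw [hf2, hf2] at this; linarith
      · have h1 : 0 < f (-x) := hfpos (-x) (by linarith)
        rw [hf2] at h1
        exact lt_trans (by linarith) (hfpos y hy)
  -- properties of h
  have h0 : h 0 = 0 := by have := hhf 0; rwa [hf01] at this
  have hmono : Monotone h := by
    intro u v huv
    by_contra hlt
    push_neg at hlt
    have := hsm hlt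
    rw [hfh, hfh] at this; linarith
  have hnn : ∀ s : ℝ, 0 ≤ s → 0 ≤ h s := fun s hs => h0 ▸ hmono hs
  have hlow : ∀ s u : ℝ, f u ≤ s → u ≤ h s := by
    intro s u hu
    have := hmono hu
    rwa [hhf] at this
  -- near-zero upper bound for f
  obtain ⟨ε, hε, hεf⟩ : ∃ ε > 0, ∀ t ∈ Set.Ioo (0:ℝ) ε, f t ≤ 2 * b₀ * t ^ (q - 1) := by
    have hev : ∀ᶠ t in nhdsWithin 0 (Set.Ioi 0), f t / t ^ (q - 1) ≤ 2 * b₀ :=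
      hf4.eventually_le_const (by linarith)
    obtain ⟨u, hu, hsub⟩ := mem_nhdsGT_iff_exists_Ioo_subset.mp hev
    refine ⟨u, hu, fun t ht => ?_⟩
    have h1 : f t / t ^ (q - 1) ≤ 2 * b₀ := hsub ht
    have h2 : (0:ℝ) < t ^ (q - 1) := Real.rpow_pos_of_pos ht.1 _
    calc f t = f t / t ^ (q - 1) * t ^ (q - 1) := by field_simp
      _ ≤ 2 * b₀ * t ^ (q - 1) := mul_le_mul_of_nonneg_right h1 h2.le
  -- at-infinity upper bound for f
  obtain ⟨M, hM1, hMf⟩ : ∃ M : ℝ, 1 ≤ M ∧ ∀ t ≥ M, f t ≤ 2 * c₀ * t ^ (p - 1) := by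
    have hev : ∀ᶠ t in atTop, f t / t ^ (p - 1) ≤ 2 * c₀ :=
      hf3.eventually_le_const (by linarith)
    obtain ⟨M₀, hM₀⟩ := eventually_atTop.mp hev
    refine ⟨max M₀ 1, le_max_right _ _, fun t ht => ?_⟩
    have ht0 : (0:ℝ) < t := lt_of_lt_of_le one_pos (le_trans (le_max_right _ _) ht)
    have h1 := hM₀ t (le_trans (le_max_left _ _) ht)
    have h2 : (0:ℝ) < t ^ (p - 1) := Real.rpow_pos_of_pos ht0 _
    calc f t = f t / t ^ (p - 1) * t ^ (p - 1) := by field_simp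
      _ ≤ 2 * c₀ * t ^ (p - 1) := mul_le_mul_of_nonneg_right h1 h2.le
  -- constants
  set a : ℝ := (2 * b₀) ^ (-(q - 1)⁻¹) with ha_def
  have ha : 0 < a := Real.rpow_pos_of_pos (by linarith) _
  set δ₁ : ℝ := (ε / a) ^ (q - 1) with hδ₁_def
  have hδ₁ : 0 < δ₁ := Real.rpow_pos_of_pos (div_pos hε ha) _
  set a' : ℝ := (2 * c₀) ^ (-(p - 1)⁻¹) with ha'_def
  have ha' : 0 < a' := Real.rpow_pos_of_pos (by linarith) _
  set T : ℝ := max ((M / a') ^ (p - 1)) δ₁ with hT_def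
  have hT : 0 < T := lt_of_lt_of_le hδ₁ (le_max_right _ _)
  -- power computations
  have haq : a ^ (q - 1) = (2 * b₀)⁻¹ := by
    rw [ha_def, ← Real.rpow_mul (by linarith : (0:ℝ) ≤ 2 * b₀), neg_mul,
      inv_mul_cancel₀ (ne_of_gt hqpos), Real.rpow_neg_one]
  have ha'p : a' ^ (p - 1) = (2 * c₀)⁻¹ := by
    rw [ha'_def, ← Real.rpow_mul (by linarith : (0:ℝ) ≤ 2 * c₀), neg_mul,
      inv_mul_cancel₀ (ne_of_gt hppos), Real.rpow_neg_one]
  have hδ₁inv : δ₁ ^ ((q - 1)⁻¹) = ε / a := by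
    rw [hδ₁_def, ← Real.rpow_mul (div_pos hε ha).le,
      mul_inv_cancel₀ (ne_of_gt hqpos), Real.rpow_one]
  -- lower bound for h near zero
  have hkeyq : ∀ s : ℝ, 0 < s → s < δ₁ → a * s ^ ((q - 1)⁻¹) ≤ h s := by
    intro s hs hsδ
    set u := a * s ^ ((q - 1)⁻¹) with hu_def
    have hspow : 0 < s ^ ((q - 1)⁻¹) := Real.rpow_pos_of_pos hs _
    have hu0 : 0 < u := mul_pos ha hspow
    have huε : u < ε := by
      have h1 : s ^ ((q - 1)⁻¹) < δ₁ ^ ((q - 1)⁻¹) :=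
        Real.rpow_lt_rpow hs.le hsδ (by positivity)
      calc u < a * δ₁ ^ ((q - 1)⁻¹) := mul_lt_mul_of_pos_left h1 ha
        _ = a * (ε / a) := by rw [hδ₁inv]
        _ = ε := by field_simp
    have hfu : f u ≤ 2 * b₀ * u ^ (q - 1) := hεf u ⟨hu0, huε⟩
    have hup : u ^ (q - 1) = (2 * b₀)⁻¹ * s := by
      rw [hu_def, Real.mul_rpow ha.le hspow.le, haq, ← Real.rpow_mul hs.le,
        inv_mul_cancel₀ (ne_of_gt hqpos), Real.rpow_one]
    have he : 2 * b₀ * ((2 * b₀)⁻¹ * s) = s := by field_simp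
    exact hlow s u (by rw [hup, he] at hfu; exact hfu)
  -- lower bound for h at infinity
  have hkeyp : ∀ s : ℝ, T ≤ s → a' * s ^ ((p - 1)⁻¹) ≤ h s := by
    intro s hTs
    have hs : 0 < s := lt_of_lt_of_le hT hTs
    set u := a' * s ^ ((p - 1)⁻¹) with hu_def
    have hspow : 0 < s ^ ((p - 1)⁻¹) := Real.rpow_pos_of_pos hs _
    have hMa : 0 < M / a' := div_pos (by linarith) ha'
    have huM : M ≤ u := by
      have h1 : (M / a') ^ (p - 1) ≤ s := le_trans (le_max_left _ _) hTs
      have h2 : ((M / a') ^ (p - 1)) ^ ((p - 1)⁻¹) ≤ s ^ ((p - 1)⁻¹) :=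
        Real.rpow_le_rpow (by positivity) h1 (by positivity)
      rw [← Real.rpow_mul hMa.le, mul_inv_cancel₀ (ne_of_gt hppos), Real.rpow_one] at h2
      calc M = a' * (M / a') := by field_simp
        _ ≤ a' * s ^ ((p - 1)⁻¹) := mul_le_mul_of_nonneg_left h2 ha'.le
    have hfu : f u ≤ 2 * c₀ * u ^ (p - 1) := hMf u huM
    have hup : u ^ (p - 1) = (2 * c₀)⁻¹ * s := by
      rw [hu_def, Real.mul_rpow ha'.le hspow.le, ha'p, ← Real.rpow_mul hs.le,
        inv_mul_cancel₀ (ne_of_gt hppos), Real.rpow_one]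
    have he : 2 * c₀ * ((2 * c₀)⁻¹ * s) = s := by field_simp
    exact hlow s u (by rw [hup, he] at hfu; exact hfu)
  -- per-point integral lower bounds
  set cq : ℝ := a / 2 ^ (q / (q - 1)) with hcq_def
  set cp : ℝ := a' / 2 ^ (p / (p - 1)) with hcp_def
  have hcq : 0 < cq := div_pos ha (Real.rpow_pos_of_pos two_pos _)
  have hcp : 0 < cp := div_pos ha' (Real.rpow_pos_of_pos two_pos _)
  have Bq : ∀ t : ℝ, 0 < t → t ≤ δ₁ → cq * t ^ (q / (q - 1)) ≤ ∫ s in (0:ℝ)..t, h s := by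
    intro t ht htδ
    have ht2 : (0:ℝ) < t / 2 := by linarith
    have h1 : a * (t / 2) ^ ((q - 1)⁻¹) ≤ h (t / 2) := hkeyq (t / 2) ht2 (by linarith)
    have h2 := aux_half_int hmono hnn ht
    have h3 : t / 2 * (a * (t / 2) ^ ((q - 1)⁻¹)) ≤ t / 2 * h (t / 2) :=
      mul_le_mul_of_nonneg_left h1 (by linarith)
    have e1 : (t / 2 : ℝ) ^ (q / (q - 1)) = t / 2 * (t / 2) ^ ((q - 1)⁻¹) := by
      rw [hrq, Real.rpow_add ht2, Real.rpow_one]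
    have e2 : (t / 2 : ℝ) ^ (q / (q - 1)) = t ^ (q / (q - 1)) / 2 ^ (q / (q - 1)) :=
      Real.div_rpow ht.le (by norm_num) _
    have heq : t / 2 * (a * (t / 2) ^ ((q - 1)⁻¹)) = cq * t ^ (q / (q - 1)) := by
      calc t / 2 * (a * (t / 2) ^ ((q - 1)⁻¹)) = a * (t / 2 * (t / 2) ^ ((q - 1)⁻¹)) := by ring
        _ = a * ((t / 2) ^ (q / (q - 1))) := by rw [← e1]
        _ = a * (t ^ (q / (q - 1)) / 2 ^ (q / (q - 1))) := by rw [e2]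
        _ = cq * t ^ (q / (q - 1)) := by rw [hcq_def]; ring
    linarith
  have Bp : ∀ t : ℝ, 2 * T ≤ t → cp * t ^ (p / (p - 1)) ≤ ∫ s in (0:ℝ)..t, h s := by
    intro t h2T
    have ht : 0 < t := by nlinarith
    have ht2 : (0:ℝ) < t / 2 := by linarith
    have h1 : a' * (t / 2) ^ ((p - 1)⁻¹) ≤ h (t / 2) := hkeyp (t / 2) (by linarith)
    have h2 := aux_half_int hmono hnn ht
    have h3 : t / 2 * (a' * (t / 2) ^ ((p - 1)⁻¹)) ≤ t / 2 * h (t / 2) :=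
      mul_le_mul_of_nonneg_left h1 (by linarith)
    have e1 : (t / 2 : ℝ) ^ (p / (p - 1)) = t / 2 * (t / 2) ^ ((p - 1)⁻¹) := by
      rw [hrp, Real.rpow_add ht2, Real.rpow_one]
    have e2 : (t / 2 : ℝ) ^ (p / (p - 1)) = t ^ (p / (p - 1)) / 2 ^ (p / (p - 1)) :=
      Real.div_rpow ht.le (by norm_num) _
    have heq : t / 2 * (a' * (t / 2) ^ ((p - 1)⁻¹)) = cp * t ^ (p / (p - 1)) := by
      calc t / 2 * (a' * (t / 2) ^ ((p - 1)⁻¹)) = a' * (t / 2 * (t / 2) ^ ((p - 1)⁻¹)) := by ring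
        _ = a' * ((t / 2) ^ (p / (p - 1))) := by rw [← e1]
        _ = a' * (t ^ (p / (p - 1)) / 2 ^ (p / (p - 1))) := by rw [e2]
        _ = cp * t ^ (p / (p - 1)) := by rw [hcp_def]; ring
    linarith
  -- assemble
  set cm : ℝ := cq * δ₁ ^ (q / (q - 1)) / (2 * T) ^ (p / (p - 1)) with hcm_def
  have hcm : 0 < cm := by
    apply div_pos (mul_pos hcq (Real.rpow_pos_of_pos hδ₁ _))
    exact Real.rpow_pos_of_pos (by linarith) _
  refine ⟨min (min cq cp) cm, δ₁, lt_min (lt_min hcq hcp) hcm, hδ₁, ?_, ?_⟩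
  · intro t ht0 htδ
    rcases eq_or_lt_of_le ht0 with rfl | ht
    · rw [intervalIntegral.integral_same, Real.zero_rpow (ne_of_gt hrq0), mul_zero]
    · have hB := Bq t ht htδ.le
      have hle : min (min cq cp) cm ≤ cq := le_trans (min_le_left _ _) (min_le_left _ _)
      have := mul_le_mul_of_nonneg_right hle (Real.rpow_nonneg ht0 (q / (q - 1)))
      linarith
  · intro t hδt
    have ht0 : 0 < t := lt_of_lt_of_le hδ₁ hδt
    rcases le_or_gt (2 * T) t with h2T | h2T
    · have hB := Bp t h2T
      have hle : min (min cq cp) cm ≤ cp := le_trans (min_le_left _ _) (min_le_right _ _)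
      have := mul_le_mul_of_nonneg_right hle (Real.rpow_nonneg ht0.le (p / (p - 1)))
      linarith
    · have hBδ := Bq δ₁ hδ₁ le_rfl
      have hHm := aux_int_mono hmono hnn hδ₁.le hδt
      have h1 : t ^ (p / (p - 1)) ≤ (2 * T) ^ (p / (p - 1)) :=
        Real.rpow_le_rpow ht0.le h2T.le hrp0.le
      have h2 : min (min cq cp) cm * t ^ (p / (p - 1)) ≤ cm * (2 * T) ^ (p / (p - 1)) :=
        mul_le_mul (min_le_right _ _) h1 (Real.rpow_nonneg ht0.le _) hcm.le
      have h3 : cm * (2 * T) ^ (p / (p - 1)) = cq * δ₁ ^ (q / (q - 1)) := by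
        rw [hcm_def]
        exact div_mul_cancel₀ _ (ne_of_gt (Real.rpow_pos_of_pos (by linarith) _))
      linarith
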